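/- Let Γ be a connected r-regular graph with v vertices and distinct adjacency eigenvalues θ_1 = r > θ_2 > ... > θ_d. Suppose f(x) = ∑_{i=0}^{t} f_i F_i(x) is a polynomial with f(r) > 0, f(θ_i) ≤ 0 for all 2 ≤ i ≤ d, f_0 > 0, and f_i ≥ 0 for all 1 ≤ i ≤ t. Then v ≤ f(r)/f_0. -/

import Mathlib

open Polynomial

/-- The orthogonal polynomials `F_j` with parameter `r`. -/
noncomputable def Fpoly (r : ℝ) : ℕ → Polynomial ℝ
  | 0 => 1
  | 1 => X
  | 2 => X ^ 2 - C r
  | (j + 3) => X * Fpoly r (j + 2) - C (r - 1) * Fpoly r (j + 1)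

namespace NozakiAux

open Matrix SimpleGraph Finset

variable {V : Type*} [Fintype V] [DecidableEq V] (G : SimpleGraph V) [DecidableRel G.Adj]

/-- The "start" incidence matrix between vertices and darts. -/
def Sm : Matrix V G.Dart ℝ := Matrix.of fun u d => if d.fst = u then 1 else 0

/-- The "end" incidence matrix between darts and vertices. -/
def Em : Matrix G.Dart V ℝ := Matrix.of fun d v => if d.snd = v then 1 else 0

/-- The non-backtracking (Hashimoto) matrix on darts. -/
def Bm : Matrix G.Dart G.Dart ℝ :=
  Matrix.of fun d e => if d.snd = e.fst ∧ e ≠ d.symm then 1 else 0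

lemma card_fiber_snd (u : V) :
    #({d : G.Dart | d.snd = u} : Finset _) = G.degree u := by
  rw [← SimpleGraph.dart_fst_fiber_card_eq_degree]
  apply Finset.card_bij (fun d _ => d.symm)
  · intro a ha
    simp only [Finset.mem_filter, Finset.mem_univ, true_and] at ha ⊢
    simpa using ha
  · intro a ha b hb hab
    simpa using congrArg SimpleGraph.Dart.symm hab
  · intro b hb
    simp only [Finset.mem_filter, Finset.mem_univ, true_and] at hb ⊢
    exact ⟨b.symm, by simpa using hb, by simp⟩

lemma Sm_mul_Em : Sm G * Em G = G.adjMatrix ℝ := by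
  ext u v
  simp only [Matrix.mul_apply, Sm, Em, Matrix.of_apply, SimpleGraph.adjMatrix_apply]
  rw [Finset.sum_congr rfl (fun d _ => by
    rw [ite_zero_mul_ite_zero, one_mul] :
      ∀ d ∈ Finset.univ, _ = if d.fst = u ∧ d.snd = v then (1:ℝ) else 0)]
  rw [Finset.sum_boole]
  by_cases h : G.Adj u v
  · have hset : ({d : G.Dart | d.fst = u ∧ d.snd = v} : Finset _) = {⟨(u, v), h⟩} := by
      ext d
      simp only [Finset.mem_filter, Finset.mem_univ, true_and, Finset.mem_singleton,
        SimpleGraph.Dart.ext_iff, Prod.ext_iff]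
    rw [hset, if_pos h]
    simp
  · have hset : ({d : G.Dart | d.fst = u ∧ d.snd = v} : Finset _) = ∅ := by
      ext d
      simp only [Finset.mem_filter, Finset.mem_univ, true_and, Finset.notMem_empty,
        iff_false, not_and]
      intro h1 h2
      exact h (h1 ▸ h2 ▸ d.adj)
    rw [hset, if_neg h]
    simp

lemma Sm_mul_Bm : Sm G * Bm G = G.adjMatrix ℝ * Sm G - (Em G)ᵀ := by
  ext u e
  have hrhs : (G.adjMatrix ℝ * Sm G) u e = if G.Adj u e.fst then 1 else 0 := by
    simp only [Matrix.mul_apply, Sm, Matrix.of_apply, SimpleGraph.adjMatrix_apply,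
      mul_ite, mul_one, mul_zero]
    rw [Finset.sum_ite_eq Finset.univ e.fst (fun w => if G.Adj u w then (1:ℝ) else 0)]
    simp
  simp only [Matrix.sub_apply, hrhs, Matrix.transpose_apply, Em, Matrix.of_apply]
  simp only [Matrix.mul_apply, Sm, Bm, Matrix.of_apply]
  rw [Finset.sum_congr rfl (fun d _ => by
    rw [ite_zero_mul_ite_zero, one_mul] :
      ∀ d ∈ Finset.univ, _ =
        if d.fst = u ∧ d.snd = e.fst ∧ e ≠ d.symm then (1:ℝ) else 0)]
  rw [Finset.sum_boole]
  by_cases h : G.Adj u e.fst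
  · rw [if_pos h]
    by_cases h2 : e.snd = u
    · rw [if_pos h2]
      have : ({d : G.Dart | d.fst = u ∧ d.snd = e.fst ∧ e ≠ d.symm} : Finset _) = ∅ := by
        ext d
        simp only [Finset.mem_filter, Finset.mem_univ, true_and, Finset.notMem_empty,
          iff_false, not_and]
        rintro h3 h4 h5
        apply h5
        ext : 1
        exact Prod.ext (h4.symm) (h2 ▸ h3.symm)
      rw [this]
      norm_num
    · rw [if_neg h2]
      have : ({d : G.Dart | d.fst = u ∧ d.snd = e.fst ∧ e ≠ d.symm} : Finset _)
          = {⟨(u, e.fst), h⟩} := by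
        ext d
        simp only [Finset.mem_filter, Finset.mem_univ, true_and, Finset.mem_singleton,
          SimpleGraph.Dart.ext_iff, Prod.ext_iff]
        constructor
        · rintro ⟨h1, h3, -⟩; exact ⟨h1, h3⟩
        · rintro ⟨h1, h3⟩
          refine ⟨h1, h3, fun hc => h2 ?_⟩
          have := congrArg (fun d : G.Dart => d.snd) hc
          simp only [SimpleGraph.Dart.symm_toProd, Prod.snd_swap] at this
          rw [this, h1]
      rw [this]
      norm_num
  · rw [if_neg h]
    have h2 : e.snd ≠ u := fun hc => h (hc ▸ e.adj.symm)
    rw [if_neg h2]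
    have : ({d : G.Dart | d.fst = u ∧ d.snd = e.fst ∧ e ≠ d.symm} : Finset _) = ∅ := by
      ext d
      simp only [Finset.mem_filter, Finset.mem_univ, true_and, Finset.notMem_empty,
        iff_false, not_and]
      rintro h3 h4
      exact absurd (h3 ▸ h4 ▸ d.adj) h
    rw [this]
    norm_num

variable {r : ℕ}

lemma Em_transpose_mul_Bm (hreg : G.IsRegularOfDegree r) :
    (Em G)ᵀ * Bm G = ((r : ℝ) - 1) • Sm G := by
  ext u e
  simp only [Matrix.mul_apply, Matrix.transpose_apply, Em, Bm, Matrix.of_apply,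
    Matrix.smul_apply, Sm, smul_eq_mul]
  rw [Finset.sum_congr rfl (fun d _ => by
    rw [ite_zero_mul_ite_zero, one_mul] :
      ∀ d ∈ Finset.univ, _ =
        if d.snd = u ∧ d.snd = e.fst ∧ e ≠ d.symm then (1:ℝ) else 0)]
  rw [Finset.sum_boole]
  by_cases h : e.fst = u
  · rw [if_pos h, mul_one]
    have hmem : e.symm ∈ ({d : G.Dart | d.snd = u} : Finset _) := by
      simp only [Finset.mem_filter, Finset.mem_univ, true_and,
        SimpleGraph.Dart.symm_toProd, Prod.snd_swap]
      exact h
    have hset : ({d : G.Dart | d.snd = u ∧ d.snd = e.fst ∧ e ≠ d.symm} : Finset _)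
        = ({d : G.Dart | d.snd = u} : Finset _).erase e.symm := by
      ext d
      simp only [Finset.mem_filter, Finset.mem_univ, true_and, Finset.mem_erase]
      constructor
      · rintro ⟨h1, -, h3⟩
        refine ⟨fun hc => h3 ?_, h1⟩
        rw [hc]; simp
      · rintro ⟨h1, h2⟩
        refine ⟨h2, h ▸ h2, fun hc => h1 ?_⟩
        rw [hc]; simp
    rw [hset, Finset.card_erase_of_mem hmem, card_fiber_snd, hreg u]
    have hr : 1 ≤ r := by
      have hcard := card_fiber_snd G u
      rw [hreg u] at hcard
      have : 0 < r := hcard ▸ Finset.card_pos.mpr ⟨e.symm, hmem⟩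
      omega
    push_cast [Nat.cast_sub hr]
    ring
  · rw [if_neg h, mul_zero]
    have : ({d : G.Dart | d.snd = u ∧ d.snd = e.fst ∧ e ≠ d.symm} : Finset _) = ∅ := by
      ext d
      simp only [Finset.mem_filter, Finset.mem_univ, true_and, Finset.notMem_empty,
        iff_false, not_and]
      rintro h1 h2
      exact absurd (h1 ▸ h2 : u = e.fst).symm h
    rw [this]
    norm_num

lemma Em_transpose_mul_Em (hreg : G.IsRegularOfDegree r) :
    (Em G)ᵀ * Em G = (r : ℝ) • (1 : Matrix V V ℝ) := by
  ext u v
  simp only [Matrix.mul_apply, Matrix.transpose_apply, Em, Matrix.of_apply,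
    Matrix.smul_apply, Matrix.one_apply, smul_eq_mul]
  rw [Finset.sum_congr rfl (fun d _ => by
    rw [ite_zero_mul_ite_zero, one_mul] :
      ∀ d ∈ Finset.univ, _ = if d.snd = u ∧ d.snd = v then (1:ℝ) else 0)]
  rw [Finset.sum_boole]
  by_cases h : u = v
  · subst h
    rw [if_pos rfl, mul_one]
    have : ({d : G.Dart | d.snd = u ∧ d.snd = u} : Finset _)
        = ({d : G.Dart | d.snd = u} : Finset _) := by
      ext d; simp [and_self]
    rw [this, card_fiber_snd, hreg u]
  · rw [if_neg h, mul_zero]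
    have : ({d : G.Dart | d.snd = u ∧ d.snd = v} : Finset _) = ∅ := by
      ext d
      simp only [Finset.mem_filter, Finset.mem_univ, true_and, Finset.notMem_empty,
        iff_false, not_and]
      rintro h1 h2
      exact absurd (h1 ▸ h2) h
    rw [this]
    norm_num

/-- The matrices counting non-backtracking walks. -/
noncomputable def Nmat (G : SimpleGraph V) [DecidableRel G.Adj] : ℕ → Matrix V V ℝ
  | 0 => 1
  | (ℓ + 1) => Sm G * (Bm G) ^ ℓ * Em G

lemma aeval_Fpoly_eq_Nmat (hreg : G.IsRegularOfDegree r) (ℓ : ℕ) :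
    Polynomial.aeval (G.adjMatrix ℝ) (Fpoly r ℓ) = Nmat G ℓ := by
  have key : ∀ m : ℕ,
      Polynomial.aeval (G.adjMatrix ℝ) (Fpoly r m) = Nmat G m ∧
      Polynomial.aeval (G.adjMatrix ℝ) (Fpoly r (m + 1)) = Nmat G (m + 1) := by
    intro m
    induction m with
    | zero =>
      constructor
      · simp [Fpoly, Nmat]
      · simp [Fpoly, Nmat, Sm_mul_Em]
    | succ n ih =>
      refine ⟨ih.2, ?_⟩
      match n with
      | 0 =>
        show Polynomial.aeval (G.adjMatrix ℝ) (Fpoly r 2) = Nmat G 2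
        simp only [Fpoly, map_sub, map_pow, aeval_X, aeval_C]
        have h2 : Nmat G 2 = Sm G * Bm G ^ 1 * Em G := rfl
        rw [h2, pow_one, Sm_mul_Bm, Matrix.sub_mul, Matrix.mul_assoc, Sm_mul_Em,
          Em_transpose_mul_Em G hreg, sq, Algebra.algebraMap_eq_smul_one]
      | Nat.succ k =>
        show Polynomial.aeval (G.adjMatrix ℝ) (Fpoly r (k + 3)) = Nmat G (k + 3)
        have h1 : Polynomial.aeval (G.adjMatrix ℝ) (Fpoly r (k + 1)) = Nmat G (k + 1) := ih.1
        have h2 : Polynomial.aeval (G.adjMatrix ℝ) (Fpoly r (k + 2)) = Nmat G (k + 2) := ih.2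
        rw [show Fpoly (r : ℝ) (k + 3)
            = X * Fpoly r (k + 2) - C ((r : ℝ) - 1) * Fpoly r (k + 1) from rfl]
        rw [map_sub, _root_.map_mul, _root_.map_mul, aeval_X, aeval_C, h1, h2,
          Algebra.algebraMap_eq_smul_one, Matrix.smul_mul, Matrix.one_mul]
        have hN3 : Nmat G (k + 3) = Sm G * Bm G ^ (k + 2) * Em G := rfl
        have hN2 : Nmat G (k + 2) = Sm G * Bm G ^ (k + 1) * Em G := rfl
        have hN1 : Nmat G (k + 1) = Sm G * Bm G ^ k * Em G := rfl
        have hSB : Sm G * Bm G ^ (k + 2) =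
            G.adjMatrix ℝ * (Sm G * Bm G ^ (k + 1)) - ((r : ℝ) - 1) • (Sm G * Bm G ^ k) := by
          calc Sm G * Bm G ^ (k + 2) = (Sm G * Bm G) * Bm G ^ (k + 1) := by
                rw [Matrix.mul_assoc, ← pow_succ']
            _ = (G.adjMatrix ℝ * Sm G - (Em G)ᵀ) * Bm G ^ (k + 1) := by rw [Sm_mul_Bm]
            _ = G.adjMatrix ℝ * (Sm G * Bm G ^ (k + 1)) - (Em G)ᵀ * Bm G ^ (k + 1) := by
                rw [Matrix.sub_mul, Matrix.mul_assoc]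
            _ = G.adjMatrix ℝ * (Sm G * Bm G ^ (k + 1))
                - ((r : ℝ) - 1) • (Sm G * Bm G ^ k) := by
                congr 1
                rw [show (Em G)ᵀ * Bm G ^ (k + 1) = ((Em G)ᵀ * Bm G) * Bm G ^ k by
                  rw [Matrix.mul_assoc, ← pow_succ'],
                  Em_transpose_mul_Bm G hreg, Matrix.smul_mul]
        rw [hN3, hN2, hN1, hSB, Matrix.sub_mul, Matrix.smul_mul]
        simp only [Matrix.mul_assoc]
  exact (key ℓ).1

/-- Entrywise nonnegativity. -/
def EntryNonneg {a b : Type*} (M : Matrix a b ℝ) : Prop := ∀ i j, 0 ≤ M i j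

lemma EntryNonneg.mul {a b c : Type*} [Fintype b] {M : Matrix a b ℝ} {N : Matrix b c ℝ}
    (hM : EntryNonneg M) (hN : EntryNonneg N) : EntryNonneg (M * N) := by
  intro i j
  rw [Matrix.mul_apply]
  exact Finset.sum_nonneg fun k _ => mul_nonneg (hM i k) (hN k j)

lemma Nmat_nonneg (ℓ : ℕ) : EntryNonneg (Nmat G ℓ) := by
  cases ℓ with
  | zero =>
    intro i j
    simp only [Nmat, Matrix.one_apply]
    split <;> norm_num
  | succ ℓ =>
    have hS : EntryNonneg (Sm G) := fun i j => by unfold Sm; dsimp; split <;> norm_num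
    have hE : EntryNonneg (Em G) := fun i j => by unfold Em; dsimp; split <;> norm_num
    have hB : EntryNonneg ((Bm G) ^ ℓ) := by
      induction ℓ with
      | zero => intro i j; simp only [pow_zero, Matrix.one_apply]; split <;> norm_num
      | succ k ihk =>
        rw [pow_succ]
        exact ihk.mul (fun i j => by unfold Bm; dsimp; split <;> norm_num)
    exact (hS.mul hB).mul hE

lemma trace_Nmat_nonneg (ℓ : ℕ) : 0 ≤ (Nmat G ℓ).trace := by
  rw [Matrix.trace]
  exact Finset.sum_nonneg fun i _ => Nmat_nonneg G ℓ i i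

lemma trace_Nmat_zero : (Nmat G 0).trace = (Fintype.card V : ℝ) := by
  simp [Nmat, Matrix.trace_one]

/-- Trace of a polynomial in a Hermitian matrix is the sum of the polynomial's values at
its eigenvalues. -/
lemma trace_aeval_hermitian {n : Type*} [Fintype n] [DecidableEq n] {A : Matrix n n ℝ}
    (hA : A.IsHermitian) (q : Polynomial ℝ) :
    (Polynomial.aeval A q).trace = ∑ i, q.eval (hA.eigenvalues i) := by
  set U : Matrix n n ℝ := (hA.eigenvectorUnitary : Matrix n n ℝ) with hU
  have hUU : star U * U = 1 := (Matrix.mem_unitaryGroup_iff'.mp hA.eigenvectorUnitary.2)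
  have hUU' : U * star U = 1 := (Matrix.mem_unitaryGroup_iff.mp hA.eigenvectorUnitary.2)
  set D : Matrix n n ℝ := Matrix.diagonal hA.eigenvalues with hD
  have hspec : A = U * D * star U := by
    have := hA.spectral_theorem
    rwa [show (RCLike.ofReal ∘ hA.eigenvalues : n → ℝ) = hA.eigenvalues by
      funext i; simp [RCLike.ofReal_real_eq_id]] at this
  have hpow : ∀ k : ℕ, A ^ k = U * D ^ k * star U := by
    intro k
    induction k with
    | zero => simp [hUU']
    | succ m ihm =>
      rw [pow_succ, ihm, hspec, pow_succ]
      calc U * D ^ m * star U * (U * D * star U)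
          = U * D ^ m * (star U * U) * D * star U := by
            simp only [Matrix.mul_assoc]
        _ = U * (D ^ m * D) * star U := by rw [hUU]; simp only [Matrix.mul_one, Matrix.mul_assoc]
  have htrpow : ∀ k : ℕ, (A ^ k).trace = ∑ i, hA.eigenvalues i ^ k := by
    intro k
    rw [hpow k, Matrix.trace_mul_cycle, hUU, Matrix.one_mul, hD,
      Matrix.diagonal_pow, Matrix.trace_diagonal]
    simp [Pi.pow_apply]
  rw [Polynomial.aeval_eq_sum_range (p := q) A, Matrix.trace_sum]
  simp only [Matrix.trace_smul, smul_eq_mul, htrpow, Finset.mul_sum]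
  rw [Finset.sum_comm]
  refine Finset.sum_congr rfl fun i _ => ?_
  rw [Polynomial.eval_eq_sum_range]

end NozakiAux

/-- Nozaki's linear programming bound for regular graphs. -/
theorem nozaki_LP_bound (r : ℕ) {V : Type*} [Fintype V] [DecidableEq V]
    (G : SimpleGraph V) [DecidableRel G.Adj]
    (hconn : G.Connected) (hreg : G.IsRegularOfDegree r)
    (d : ℕ) (θ : Fin d → ℝ)
    (hθ0 : 0 < d) (hθr : θ ⟨0, hθ0⟩ = r)
    (hθanti : ∀ i j : Fin d, i < j → θ j < θ i)
    (hspec : ∀ lam : ℝ,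
      (∃ x : V → ℝ, x ≠ 0 ∧ (G.adjMatrix ℝ).mulVec x = lam • x) ↔ ∃ i, θ i = lam)
    (t : ℕ) (f : ℕ → ℝ)
    (p : Polynomial ℝ) (hp : p = ∑ i ∈ Finset.range (t + 1), C (f i) * Fpoly r i)
    (hpr : 0 < p.eval (r : ℝ))
    (hpθ : ∀ i : Fin d, 0 < (i : ℕ) → p.eval (θ i) ≤ 0)
    (hf0 : 0 < f 0) (hfi : ∀ i, 1 ≤ i → i ≤ t → 0 ≤ f i) :
    (Fintype.card V : ℝ) ≤ p.eval (r : ℝ) / f 0 := by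
  classical
  have hV : Nonempty V := hconn.nonempty
  set A := G.adjMatrix ℝ with hA_def
  have hA : A.IsHermitian := by
    rw [Matrix.IsHermitian]
    ext i j
    simp [hA_def, Matrix.conjTranspose_apply, SimpleGraph.adjMatrix_apply, SimpleGraph.adj_comm]
  -- Lower bound on the trace of p(A)
  have htr_lower : (Fintype.card V : ℝ) * f 0 ≤ (Polynomial.aeval A p).trace := by
    rw [hp, map_sum, Matrix.trace_sum]
    rw [Finset.sum_congr rfl (fun i _ => by
      rw [_root_.map_mul, aeval_C, NozakiAux.aeval_Fpoly_eq_Nmat G hreg,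
        Algebra.algebraMap_eq_smul_one, Matrix.smul_mul, Matrix.one_mul,
        Matrix.trace_smul, smul_eq_mul] :
      ∀ i ∈ Finset.range (t + 1),
        (Polynomial.aeval A (C (f i) * Fpoly r i)).trace
          = f i * (NozakiAux.Nmat G i).trace)]
    have h0 : (Fintype.card V : ℝ) * f 0 = f 0 * (NozakiAux.Nmat G 0).trace := by
      rw [NozakiAux.trace_Nmat_zero]; ring
    rw [h0]
    refine Finset.single_le_sum (f := fun i => f i * (NozakiAux.Nmat G i).trace)
      (fun i hi => ?_) (Finset.mem_range.2 (Nat.succ_pos t))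
    rcases Nat.eq_zero_or_pos i with h | h
    · subst h
      exact mul_nonneg hf0.le (NozakiAux.trace_Nmat_nonneg G 0)
    · exact mul_nonneg (hfi i h (Nat.lt_succ_iff.mp (Finset.mem_range.1 hi)))
        (NozakiAux.trace_Nmat_nonneg G i)
  -- eigenvectors of eigenvalue r are constant
  have hconst : ∀ x : V → ℝ, A.mulVec x = (r : ℝ) • x → ∀ u v : V, x u = x v := by
    intro x hx
    obtain ⟨u₀, -, hmax⟩ := Finset.exists_max_image Finset.univ x
      ⟨Classical.arbitrary V, Finset.mem_univ _⟩
    have hstep : ∀ u, x u = x u₀ → ∀ v, G.Adj u v → x v = x u₀ := by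
      intro u hu v hv
      by_contra hne
      have hlt : x v < x u₀ := lt_of_le_of_ne (hmax v (Finset.mem_univ v)) hne
      have hsum : ∑ w ∈ G.neighborFinset u, x w = (r : ℝ) * x u₀ := by
        have h1 := congrFun hx u
        rw [SimpleGraph.adjMatrix_mulVec_apply] at h1
        rw [h1, Pi.smul_apply, smul_eq_mul, hu]
      have hlt2 : ∑ w ∈ G.neighborFinset u, x w < ∑ _w ∈ G.neighborFinset u, x u₀ :=
        Finset.sum_lt_sum (fun i _ => hmax i (Finset.mem_univ i))
          ⟨v, (SimpleGraph.mem_neighborFinset G u v).2 hv, hlt⟩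
      rw [Finset.sum_const] at hlt2
      have hdeg : (G.neighborFinset u).card = r := hreg u
      rw [hdeg, nsmul_eq_mul, hsum] at hlt2
      exact lt_irrefl _ hlt2
    have hall : ∀ v, x v = x u₀ := by
      have key : ∀ (a b : V) (_w : G.Walk a b), x a = x u₀ → x b = x u₀ := by
        intro a b w
        induction w with
        | nil => exact fun h => h
        | cons h _w ih => exact fun hc => ih (hstep _ hc _ h)
      intro v
      obtain ⟨w⟩ := hconn u₀ v
      exact key u₀ v w rfl
    intro u v
    rw [hall u, hall v]
  -- at most one eigenvalue equal to r
  have hmult : ∀ i j : V, hA.eigenvalues i = (r : ℝ) → hA.eigenvalues j = (r : ℝ) → i = j := by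
    intro i j hi hj
    by_contra hij
    have hxi := hA.mulVec_eigenvectorBasis i
    have hxj := hA.mulVec_eigenvectorBasis j
    rw [hi] at hxi
    rw [hj] at hxj
    have hci : ∀ u v : V, hA.eigenvectorBasis i u = hA.eigenvectorBasis i v :=
      hconst _ hxi
    have hcj : ∀ u v : V, hA.eigenvectorBasis j u = hA.eigenvectorBasis j v :=
      hconst _ hxj
    have horth := hA.eigenvectorBasis.orthonormal.2 hij
    have hinner : (0 : ℝ) = ∑ u : V, hA.eigenvectorBasis i u * hA.eigenvectorBasis j u := by
      rw [← horth, PiLp.inner_apply]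
      simp
      exact Finset.sum_congr rfl fun _ _ => mul_comm _ _
    obtain ⟨u₀⟩ := hV
    have hconst_sum : ∑ u : V, hA.eigenvectorBasis i u * hA.eigenvectorBasis j u
        = (Fintype.card V : ℝ) * (hA.eigenvectorBasis i u₀ * hA.eigenvectorBasis j u₀) := by
      rw [Finset.sum_congr rfl (fun u _ => by rw [hci u u₀, hcj u u₀] :
        ∀ u ∈ Finset.univ, hA.eigenvectorBasis i u * hA.eigenvectorBasis j u
          = hA.eigenvectorBasis i u₀ * hA.eigenvectorBasis j u₀)]
      rw [Finset.sum_const, Finset.card_univ, nsmul_eq_mul]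
    have hne_i : hA.eigenvectorBasis i u₀ ≠ 0 := by
      intro hz
      apply hA.eigenvectorBasis.orthonormal.ne_zero i
      ext u
      rw [hci u u₀, hz]
      rfl
    have hne_j : hA.eigenvectorBasis j u₀ ≠ 0 := by
      intro hz
      apply hA.eigenvectorBasis.orthonormal.ne_zero j
      ext u
      rw [hcj u u₀, hz]
      rfl
    have hcard : (0 : ℝ) < Fintype.card V := by
      exact_mod_cast Fintype.card_pos_iff.2 ⟨u₀⟩
    rw [hconst_sum] at hinner
    exact (mul_ne_zero (ne_of_gt hcard) (mul_ne_zero hne_i hne_j)) hinner.symm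
  -- every eigenvalue is some θ j
  have heig : ∀ i : V, ∃ j : Fin d, θ j = hA.eigenvalues i := by
    intro i
    apply (hspec _).1
    exact ⟨hA.eigenvectorBasis i, by simpa using hA.eigenvectorBasis.orthonormal.ne_zero i,
      hA.mulVec_eigenvectorBasis i⟩
  -- upper bound on the sum of eigenvalues
  have hsum_le : ∑ i, p.eval (hA.eigenvalues i) ≤ p.eval (r : ℝ) := by
    rw [← Finset.sum_filter_add_sum_filter_not Finset.univ
      (fun i => hA.eigenvalues i = (r : ℝ)) (fun i => p.eval (hA.eigenvalues i))]
    have hle1 : ∑ i ∈ Finset.univ.filter (fun i => hA.eigenvalues i = (r : ℝ)),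
        p.eval (hA.eigenvalues i) ≤ p.eval (r : ℝ) := by
      rw [Finset.sum_congr rfl (fun i hi => by
        rw [(Finset.mem_filter.1 hi).2] :
        ∀ i ∈ Finset.univ.filter (fun i => hA.eigenvalues i = (r : ℝ)),
          p.eval (hA.eigenvalues i) = p.eval (r : ℝ))]
      rw [Finset.sum_const, nsmul_eq_mul]
      have hcard1 : (Finset.univ.filter (fun i => hA.eigenvalues i = (r : ℝ))).card ≤ 1 :=
        Finset.card_le_one.2 (fun a ha b hb =>
          hmult a b (Finset.mem_filter.1 ha).2 (Finset.mem_filter.1 hb).2)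
      calc ((Finset.univ.filter (fun i => hA.eigenvalues i = (r : ℝ))).card : ℝ)
          * p.eval (r : ℝ) ≤ 1 * p.eval (r : ℝ) := by
            apply mul_le_mul_of_nonneg_right _ hpr.le
            exact_mod_cast hcard1
        _ = p.eval (r : ℝ) := one_mul _
    have hle2 : ∑ i ∈ Finset.univ.filter (fun i => ¬ hA.eigenvalues i = (r : ℝ)),
        p.eval (hA.eigenvalues i) ≤ 0 := by
      apply Finset.sum_nonpos
      intro i hi
      have hne := (Finset.mem_filter.1 hi).2
      obtain ⟨j, hj⟩ := heig i
      have hjne : (0 : ℕ) < (j : ℕ) := by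
        rcases Nat.eq_zero_or_pos (j : ℕ) with h | h
        · exfalso
          apply hne
          rw [← hj, show j = ⟨0, hθ0⟩ from Fin.ext h, hθr]
        · exact h
      rw [← hj]
      exact hpθ j hjne
    linarith
  -- conclusion
  have htr_eq := NozakiAux.trace_aeval_hermitian hA p
  have hfinal : (Fintype.card V : ℝ) * f 0 ≤ p.eval (r : ℝ) := by
    calc (Fintype.card V : ℝ) * f 0 ≤ (Polynomial.aeval A p).trace := htr_lower
      _ = ∑ i, p.eval (hA.eigenvalues i) := htr_eq
      _ ≤ p.eval (r : ℝ) := hsum_le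
  rw [le_div_iff₀ hf0]
  exact hfinal
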